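/- For n ≥ 2, the classical Fibonacci group F(2, 2n) = ⟨z₁,…,z_{2n} | z_i z_{i+1} = z_{i+2} (subscripts mod 2n)⟩ with the additional relation z₂z₄⋯z_{2n} = e is not left-orderable. -/

import Mathlib

/-- A group is left-orderable if there is a strict total order that is left-invariant. -/
def IsLeftOrderable (G : Type*) [Group G] : Prop :=
  ∃ r : G → G → Prop, IsStrictTotalOrder G r ∧ ∀ x y z : G, r x y → r (z * x) (z * y)

/-- The Fibonacci relators `z_i z_{i+1} z_{i+2}⁻¹` (subscripts mod `2n`) together with
the extra relator `z₂z₄⋯z_{2n}`. -/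
def fib2Rels (n : ℕ) : Set (FreeGroup (ZMod (2 * n))) :=
  {w | ∃ i : ZMod (2 * n), w = FreeGroup.of i * FreeGroup.of (i + 1) * (FreeGroup.of (i + 2))⁻¹} ∪
    {((List.range n).map (fun j => FreeGroup.of ((2 * j + 2 : ℕ) : ZMod (2 * n)))).prod}


/-- Cassini-type identity. -/
lemma fibCassini (k : ℕ) :
    (Nat.fib (k+1) : ℤ)^2 - Nat.fib (k+1) * Nat.fib k - (Nat.fib k : ℤ)^2 = (-1)^k := by
  induction k with
  | zero => simp
  | succ k ih =>
    have h : Nat.fib (k+2) = Nat.fib k + Nat.fib (k+1) := Nat.fib_add_two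
    push_cast [h]
    linear_combination -ih

/-- The modulus `L_{2n} - 2`. -/
def mnum (n : ℕ) : ℕ := (Nat.fib (2*n+1) - 1) + (Nat.fib (2*n-1) - 1)

/-- The seed sequence: `wseq k = c0 * fib (k-1) + c1 * fib k` with
`c0 = fib (2n+1) - 1`, `c1 = -fib (2n)`. -/
def wseq (n : ℕ) : ℕ → ZMod (mnum n) := fun k =>
  ((Nat.fib (2*n+1) : ZMod (mnum n)) - 1) *
      ((Nat.fib (k+1) : ZMod (mnum n)) - (Nat.fib k : ZMod (mnum n)))
    - (Nat.fib (2*n) : ZMod (mnum n)) * (Nat.fib k : ZMod (mnum n))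

lemma fib_split {n : ℕ} (hn : 2 ≤ n) :
    Nat.fib (2*n+1) = Nat.fib (2*n-1) + Nat.fib (2*n) := by
  have h := Nat.fib_add_two (n := 2*n-1)
  have h1 : 2*n-1+1 = 2*n := by omega
  have h2 : 2*n-1+2 = 2*n+1 := by omega
  rw [h1, h2] at h
  exact h

lemma fib_odd_ge {n : ℕ} (hn : 2 ≤ n) : 2 ≤ Nat.fib (2*n-1) := by
  have : Nat.fib 3 ≤ Nat.fib (2*n-1) := Nat.fib_mono (by omega)
  simpa [Nat.fib] using this

lemma fib_even_ge {n : ℕ} (hn : 2 ≤ n) : 3 ≤ Nat.fib (2*n) := by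
  have : Nat.fib 4 ≤ Nat.fib (2*n) := Nat.fib_mono (by omega)
  simpa [Nat.fib] using this

lemma mnum_gt {n : ℕ} (hn : 2 ≤ n) : Nat.fib (2*n) < mnum n := by
  have h1 := fib_split hn
  have h2 := fib_odd_ge hn
  unfold mnum
  omega

lemma mnum_ge {n : ℕ} (hn : 2 ≤ n) : 2 ≤ mnum n := by
  have h1 := mnum_gt hn
  have h2 := fib_even_ge hn
  omega

/-- the recurrence -/
lemma wseq_rec (n : ℕ) (k : ℕ) : wseq n k + wseq n (k+1) = wseq n (k+2) := by
  have h2 : Nat.fib (k+2) = Nat.fib k + Nat.fib (k+1) := Nat.fib_add_two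
  have h3 : Nat.fib (k+3) = Nat.fib (k+1) + Nat.fib (k+2) := Nat.fib_add_two (n := k+1)
  unfold wseq
  rw [show k+2+1 = k+3 from rfl, h3, h2]
  push_cast
  ring

lemma wseq_zero (n : ℕ) : wseq n 0 = (Nat.fib (2*n+1) : ZMod (mnum n)) - 1 := by
  unfold wseq; simp

lemma wseq_one (n : ℕ) : wseq n 1 = -(Nat.fib (2*n) : ZMod (mnum n)) := by
  unfold wseq; simp [Nat.fib]

/-- first periodicity seed -/
lemma wseq_per0 {n : ℕ} (hn : 2 ≤ n) : wseq n (2*n) = wseq n 0 := by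
  have hcas : (Nat.fib (2*n+1) : ℤ)^2 - Nat.fib (2*n+1) * Nat.fib (2*n)
      - (Nat.fib (2*n) : ℤ)^2 = 1 := by
    have := fibCassini (2*n)
    rwa [pow_mul, neg_one_sq, one_pow] at this
  have hm : (mnum n : ℤ) = 2 * (Nat.fib (2*n+1) : ℤ) - Nat.fib (2*n) - 2 := by
    have h1 := fib_split hn
    have h2 := fib_odd_ge hn
    have : mnum n + 2 + Nat.fib (2*n) = 2 * Nat.fib (2*n+1) := by unfold mnum; omega
    omega
  -- integer identity
  have key : ((Nat.fib (2*n+1) : ℤ) - 1) * ((Nat.fib (2*n+1) : ℤ) - Nat.fib (2*n))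
      - (Nat.fib (2*n) : ℤ) * Nat.fib (2*n)
      - (((Nat.fib (2*n+1) : ℤ) - 1) * (1 - 0) - (Nat.fib (2*n) : ℤ) * 0)
      = -(mnum n : ℤ) := by
    linear_combination hcas + hm
  have key2 := congrArg (fun x : ℤ => (x : ZMod (mnum n))) key
  push_cast at key2
  rw [ZMod.natCast_self] at key2
  unfold wseq
  simp only [Nat.fib_one, Nat.fib_zero]
  push_cast
  linear_combination key2

/-- second periodicity seed -/
lemma wseq_per1 (n : ℕ) : wseq n (2*n+1) = wseq n 1 := by
  have h2 : Nat.fib (2*n+2) = Nat.fib (2*n) + Nat.fib (2*n+1) := Nat.fib_add_two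
  unfold wseq
  rw [show 2*n+1+1 = 2*n+2 from rfl, h2]
  simp [Nat.fib]
  push_cast
  ring

lemma wseq_periodic {n : ℕ} (hn : 2 ≤ n) : ∀ a, wseq n (a + 2*n) = wseq n a := by
  intro a
  induction a using Nat.twoStepInduction with
  | zero => rw [Nat.zero_add]; exact wseq_per0 hn
  | one => rw [Nat.add_comm]; exact wseq_per1 n
  | more a ih1 ih2 =>
    have e : a + 2 + 2*n = (a + 2*n) + 2 := by omega
    have e1 : a + 1 + 2*n = (a + 2*n) + 1 := by omega
    rw [e, ← wseq_rec, ← e1, ih1, ih2, wseq_rec]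

lemma wseq_per_mul {n : ℕ} (hn : 2 ≤ n) : ∀ t a, wseq n (a + 2*n*t) = wseq n a := by
  intro t
  induction t with
  | zero => simp
  | succ t ih =>
    intro a
    have e : a + 2*n*(t+1) = (a + 2*n*t) + 2*n := by ring
    rw [e, wseq_periodic hn, ih]

lemma wseq_mod {n : ℕ} (hn : 2 ≤ n) (a : ℕ) : wseq n (a % (2*n)) = wseq n a := by
  conv_rhs => rw [← Nat.mod_add_div a (2*n)]
  exact (wseq_per_mul hn (a / (2*n)) (a % (2*n))).symm

lemma wseq_mod_add {n : ℕ} (hn : 2 ≤ n) (a b : ℕ) :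
    wseq n (a % (2*n) + b) = wseq n (a + b) := by
  conv_rhs => rw [← Nat.mod_add_div a (2*n)]
  have e : a % (2*n) + 2*n * (a / (2*n)) + b = (a % (2*n) + b) + 2*n*(a / (2*n)) := by ring
  rw [e, wseq_per_mul hn]

/-- list sums over `range` -/
lemma lsum_succ {M : Type*} [AddCommMonoid M] (f : ℕ → M) (N : ℕ) :
    ((List.range (N+1)).map f).sum = ((List.range N).map f).sum + f N := by
  rw [List.range_succ, List.map_append, List.sum_append]; simp

lemma lsum_add {M : Type*} [AddCommMonoid M] (f g h : ℕ → M)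
    (hfg : ∀ j, f j + g j = h j) (N : ℕ) :
    ((List.range N).map h).sum = ((List.range N).map f).sum + ((List.range N).map g).sum := by
  induction N with
  | zero => simp
  | succ N ih => rw [lsum_succ, lsum_succ, lsum_succ, ih, ← hfg]; abel

lemma lsum_shift {M : Type*} [AddCommGroup M] (f : ℕ → M) (N : ℕ) :
    ((List.range N).map (fun j => f (j+1))).sum
      = ((List.range N).map f).sum + f N - f 0 := by
  induction N with
  | zero => simp
  | succ N ih => rw [lsum_succ, lsum_succ, ih]; abel

/-- the crucial sum vanishing -/
lemma wseq_sum_zero {n : ℕ} (hn : 2 ≤ n) :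
    ((List.range n).map (fun j => wseq n (2*j+2))).sum = 0 := by
  set A := ((List.range n).map (fun j => wseq n (2*j))).sum with hA
  set B := ((List.range n).map (fun j => wseq n (2*j+1))).sum with hB
  set C := ((List.range n).map (fun j => wseq n (2*j+2))).sum with hC
  have h1 : C = A + B := lsum_add _ _ _ (fun j => wseq_rec n (2*j)) n
  have h2 : C = A := by
    have e : (fun j => wseq n (2*j+2)) = (fun j => wseq n (2*(j+1))) := by
      funext j; congr 1 <;> omega
    rw [hC, e, lsum_shift (fun j => wseq n (2*j)) n, ← hA, wseq_per0 hn]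
    have : wseq n (2*0) = wseq n 0 := by norm_num
    rw [this]
    all_goals abel
  have pw : ∀ j, wseq n (2*j+1) + wseq n (2*j+2) = wseq n (2*j+3) := by
    intro j
    have := wseq_rec n (2*j+1)
    rwa [show 2*j+1+1 = 2*j+2 from rfl, show 2*j+1+2 = 2*j+3 from rfl] at this
  have h3 : ((List.range n).map (fun j => wseq n (2*j+3))).sum = B + C :=
    lsum_add _ _ _ pw n
  have h4 : ((List.range n).map (fun j => wseq n (2*j+3))).sum = B := by
    have e : (fun j => wseq n (2*j+3)) = (fun j => wseq n (2*(j+1)+1)) := by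
      funext j; congr 1 <;> omega
    rw [e, lsum_shift (fun j => wseq n (2*j+1)) n, ← hB, wseq_per1 n]
    have : wseq n (2*0+1) = wseq n 1 := by norm_num
    rw [this]
    all_goals abel
  have hB0 : B = 0 := by
    rw [h2] at h1
    exact (left_eq_add.mp h1)
  have h5 : B = B + C := h4 ▸ h3
  exact (left_eq_add.mp h5)


def ffun (n : ℕ) : ZMod (2*n) → Multiplicative (ZMod (mnum n)) :=
  fun i => Multiplicative.ofAdd (wseq n i.val)

lemma myOfAddListSum {A : Type*} [AddCommMonoid A] (l : List ℕ) (g : ℕ → A) :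
    (l.map (fun x => Multiplicative.ofAdd (g x))).prod
      = Multiplicative.ofAdd ((l.map g).sum) := by
  induction l with
  | nil => rfl
  | cons a t ih => simp [List.map_cons, List.prod_cons, List.sum_cons, ih, ofAdd_add]

lemma lift_rels {n : ℕ} (hn : 2 ≤ n) :
    ∀ w ∈ fib2Rels n, FreeGroup.lift (ffun n) w = 1 := by
  haveI : NeZero (2*n) := ⟨by omega⟩
  haveI : Fact (1 < 2*n) := ⟨by omega⟩
  rintro w (⟨i, rfl⟩ | rfl)
  · simp only [map_mul, map_inv, FreeGroup.lift_apply_of]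
    rw [mul_inv_eq_one]
    show Multiplicative.ofAdd (wseq n i.val) * Multiplicative.ofAdd (wseq n (i+1).val)
        = Multiplicative.ofAdd (wseq n (i+2).val)
    rw [← ofAdd_add]
    congr 1
    have e1 : (i+1).val = (i.val + 1) % (2*n) := by
      rw [ZMod.val_add, ZMod.val_one]
    have e2 : (i+2).val = ((i.val + 1) % (2*n) + 1) % (2*n) := by
      have h : i + 2 = (i + 1) + 1 := by ring
      rw [h, ZMod.val_add, ZMod.val_one, e1]
    rw [e1, e2, wseq_mod hn (i.val + 1),
      wseq_mod hn ((i.val + 1) % (2*n) + 1), wseq_mod_add hn (i.val + 1) 1]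
    rw [show i.val + 1 + 1 = i.val + 2 from rfl]
    exact wseq_rec n i.val
  · rw [map_list_prod, List.map_map]
    have e : (FreeGroup.lift (ffun n)) ∘ (fun j => FreeGroup.of ((2*j+2 : ℕ) : ZMod (2*n)))
        = fun j => Multiplicative.ofAdd (wseq n (2*j+2)) := by
      funext j
      simp only [Function.comp_apply, FreeGroup.lift_apply_of]
      show Multiplicative.ofAdd (wseq n (((2*j+2 : ℕ) : ZMod (2*n))).val) = _
      rw [ZMod.val_natCast, wseq_mod hn]
    rw [e, myOfAddListSum (List.range n) (fun j => wseq n (2*j+2)), wseq_sum_zero hn, ofAdd_zero]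

lemma of_one_ne_one {n : ℕ} (hn : 2 ≤ n) :
    (PresentedGroup.of (1 : ZMod (2*n)) : PresentedGroup (fib2Rels n)) ≠ 1 := by
  haveI : Fact (1 < 2*n) := ⟨by omega⟩
  intro h
  have h2 := congrArg (PresentedGroup.toGroup (lift_rels hn)) h
  rw [map_one, PresentedGroup.toGroup.of] at h2
  have h3 : wseq n ((1 : ZMod (2*n)).val) = 0 := by
    simpa [ffun, ofAdd_eq_one] using h2
  rw [ZMod.val_one, wseq_one] at h3
  have h4 : (Nat.fib (2*n) : ZMod (mnum n)) = 0 := by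
    rwa [neg_eq_zero] at h3
  haveI : NeZero (mnum n) := ⟨by have := mnum_ge hn; omega⟩
  rw [ZMod.natCast_eq_zero_iff] at h4
  have h5 := Nat.le_of_dvd (by have := fib_even_ge hn; omega) h4
  have h6 := mnum_gt hn
  omega


def sgen (n : ℕ) : ℕ → PresentedGroup (fib2Rels n) :=
  fun k => PresentedGroup.of ((k : ZMod (2*n)))

lemma rels_one {n : ℕ} {w : FreeGroup (ZMod (2*n))} (hw : w ∈ fib2Rels n) :
    PresentedGroup.mk (fib2Rels n) w = 1 :=
  (QuotientGroup.eq_one_iff w).mpr (Subgroup.subset_normalClosure hw)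

lemma sgen_rec {n : ℕ} (k : ℕ) : sgen n k * sgen n (k+1) = sgen n (k+2) := by
  have h := rels_one (n := n)
    (Set.mem_union_left _ ⟨(k : ZMod (2*n)), rfl⟩)
  rw [map_mul, map_mul, map_inv, mul_inv_eq_one] at h
  have e1 : ((k+1 : ℕ) : ZMod (2*n)) = (k : ZMod (2*n)) + 1 := by push_cast; ring
  have e2 : ((k+2 : ℕ) : ZMod (2*n)) = (k : ZMod (2*n)) + 2 := by push_cast; ring
  show PresentedGroup.of ((k : ℕ) : ZMod (2*n)) * PresentedGroup.of ((k+1 : ℕ) : ZMod (2*n))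
      = PresentedGroup.of ((k+2 : ℕ) : ZMod (2*n))
  rw [e1, e2]
  exact h

lemma sgen_per (n a t : ℕ) : sgen n (a + 2*n*t) = sgen n a := by
  unfold sgen
  have e : ((a + 2*n*t : ℕ) : ZMod (2*n)) = ((a : ℕ) : ZMod (2*n)) := by
    rw [Nat.cast_add, Nat.cast_mul, ZMod.natCast_self, zero_mul, add_zero]
  rw [e]

lemma sgen_prod {n : ℕ} :
    ((List.range n).map (fun j => sgen n (2*j+2))).prod = 1 := by
  have h := rels_one (n := n) (Set.mem_union_right _ rfl)
  rw [map_list_prod, List.map_map] at h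
  exact h

/-- For `n ≥ 2`, the classical Fibonacci group `F(2, 2n)` with the additional relation
`z₂z₄⋯z_{2n} = e` is not left-orderable. -/
theorem stmt_11 (n : ℕ) (hn : 2 ≤ n) :
    ¬ IsLeftOrderable (PresentedGroup (fib2Rels n)) := by
  rintro ⟨r, hsto, hli⟩
  have tri : ∀ a b, r a b ∨ a = b ∨ r b a := fun a b => by
    by_contra hc; push_neg at hc; exact hc.2.1 (hsto.trichotomous a b hc.1 hc.2.2)
  have rtrans : ∀ {a b c}, r a b → r b c → r a c :=
    fun {a b c} => hsto.toIsStrictOrder.toIsTrans.trans a b c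
  have irr : ∀ a, ¬ r a a := hsto.toIsStrictOrder.irrefl
  have mulP : ∀ a b, r 1 a → r 1 b → r 1 (a*b) := by
    intro a b ha hb
    have h := hli 1 b a hb
    rw [mul_one] at h
    exact rtrans ha h
  have mulN : ∀ a b, r a 1 → r b 1 → r (a*b) 1 := by
    intro a b ha hb
    have h := hli b 1 a hb
    rw [mul_one] at h
    exact rtrans h ha
  have prodP : ∀ l : List (PresentedGroup (fib2Rels n)), (∀ x ∈ l, r 1 x) →
      ∀ g, r 1 g → r 1 (l.prod * g) := by
    intro l
    induction l with
    | nil => intro _ g hg; rwa [List.prod_nil, one_mul]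
    | cons a t ih =>
      intro hmem g hg
      rw [List.prod_cons, mul_assoc]
      exact mulP a _ (hmem a (by simp)) (ih (fun x hx => hmem x (by simp [hx])) g hg)
  have prodN : ∀ l : List (PresentedGroup (fib2Rels n)), (∀ x ∈ l, r x 1) →
      ∀ g, r g 1 → r (l.prod * g) 1 := by
    intro l
    induction l with
    | nil => intro _ g hg; rwa [List.prod_nil, one_mul]
    | cons a t ih =>
      intro hmem g hg
      rw [List.prod_cons, mul_assoc]
      exact mulN a _ (hmem a (by simp)) (ih (fun x hx => hmem x (by simp [hx])) g hg)
  have finalP : (∀ j, r 1 (sgen n (2*j+2))) → False := by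
    intro hP
    have hprod := sgen_prod (n := n)
    obtain ⟨n', hn'⟩ : ∃ n', n = n' + 1 := ⟨n-1, by omega⟩
    rw [show List.range n = List.range n' ++ [n'] from by rw [hn', List.range_succ],
      List.map_append, List.prod_append] at hprod
    simp only [List.map_cons, List.map_nil, List.prod_cons, List.prod_nil, mul_one] at hprod
    have h := prodP ((List.range n').map (fun j => sgen n (2*j+2)))
      (fun x hx => by
        obtain ⟨j, _, rfl⟩ := List.mem_map.1 hx
        exact hP j)
      (sgen n (2*n'+2)) (hP n')
    rw [hprod] at h
    exact irr 1 h
  have finalN : (∀ j, r (sgen n (2*j+2)) 1) → False := by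
    intro hN
    have hprod := sgen_prod (n := n)
    obtain ⟨n', hn'⟩ : ∃ n', n = n' + 1 := ⟨n-1, by omega⟩
    rw [show List.range n = List.range n' ++ [n'] from by rw [hn', List.range_succ],
      List.map_append, List.prod_append] at hprod
    simp only [List.map_cons, List.map_nil, List.prod_cons, List.prod_nil, mul_one] at hprod
    have h := prodN ((List.range n').map (fun j => sgen n (2*j+2)))
      (fun x hx => by
        obtain ⟨j, _, rfl⟩ := List.mem_map.1 hx
        exact hN j)
      (sgen n (2*n'+2)) (hN n')
    rw [hprod] at h
    exact irr 1 h
  have allP : ∀ k, r 1 (sgen n k) → r 1 (sgen n (k+1)) → ∀ a, r 1 (sgen n a) := by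
    intro k h0 h1
    have step : ∀ j, r 1 (sgen n (k+j)) := by
      intro j
      induction j using Nat.twoStepInduction with
      | zero => simpa using h0
      | one => exact h1
      | more j ih1 ih2 =>
        have e : k + (j+2) = (k+j) + 2 := by omega
        have e1 : k + (j+1) = (k+j) + 1 := by omega
        rw [e, ← sgen_rec]
        rw [e1] at ih2
        exact mulP _ _ ih1 ih2
    intro a
    have hk : a + 2*n*k = k + (a + 2*n*k - k) := by
      have : k ≤ 2*n*k := Nat.le_mul_of_pos_left k (by omega)
      omega
    have h := step (a + 2*n*k - k)
    rw [← hk] at h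
    rwa [sgen_per] at h
  have allN : ∀ k, r (sgen n k) 1 → r (sgen n (k+1)) 1 → ∀ a, r (sgen n a) 1 := by
    intro k h0 h1
    have step : ∀ j, r (sgen n (k+j)) 1 := by
      intro j
      induction j using Nat.twoStepInduction with
      | zero => simpa using h0
      | one => exact h1
      | more j ih1 ih2 =>
        have e : k + (j+2) = (k+j) + 2 := by omega
        have e1 : k + (j+1) = (k+j) + 1 := by omega
        rw [e, ← sgen_rec]
        rw [e1] at ih2
        exact mulN _ _ ih1 ih2
    intro a
    have hk : a + 2*n*k = k + (a + 2*n*k - k) := by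
      have : k ≤ 2*n*k := Nat.le_mul_of_pos_left k (by omega)
      omega
    have h := step (a + 2*n*k - k)
    rw [← hk] at h
    rwa [sgen_per] at h
  have pairP : ∀ k, r 1 (sgen n k) → r 1 (sgen n (k+1)) → False :=
    fun k h0 h1 => finalP (fun j => allP k h0 h1 (2*j+2))
  have pairN : ∀ k, r (sgen n k) 1 → r (sgen n (k+1)) 1 → False :=
    fun k h0 h1 => finalN (fun j => allN k h0 h1 (2*j+2))
  have hz1 : sgen n 1 ≠ 1 := by
    have e : ((1:ℕ) : ZMod (2*n)) = 1 := Nat.cast_one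
    unfold sgen
    rw [e]
    exact of_one_ne_one hn
  have nonone : ∀ k, sgen n k ≠ 1 := by
    intro k hk
    have heq : sgen n (k+2) = sgen n (k+1) := by rw [← sgen_rec, hk, one_mul]
    rcases tri 1 (sgen n (k+1)) with hP | h1 | hN
    · exact pairP (k+1) hP (by rw [show k+1+1 = k+2 from rfl, heq]; exact hP)
    · have hall : ∀ j, sgen n (k+j) = 1 := by
        intro j
        induction j using Nat.twoStepInduction with
        | zero => simpa using hk
        | one => exact h1.symm
        | more j ih1 ih2 =>
          have e : k + (j+2) = (k+j) + 2 := by omega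
          have e1 : k + (j+1) = (k+j) + 1 := by omega
          rw [e, ← sgen_rec, ih1, one_mul, ← e1, ih2]
      have hk1 : 1 + 2*n*k = k + (1 + 2*n*k - k) := by
        have : k ≤ 2*n*k := Nat.le_mul_of_pos_left k (by omega)
        omega
      have h := hall (1 + 2*n*k - k)
      rw [← hk1, sgen_per] at h
      exact hz1 h
    · exact pairN (k+1) hN (by rw [show k+1+1 = k+2 from rfl, heq]; exact hN)
  rcases tri 1 (sgen n 0) with hP | h1 | hN
  · -- all generators alternate, evens positive
    have evens : ∀ j, r 1 (sgen n (2*j)) := by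
      intro j
      induction j with
      | zero => simpa using hP
      | succ j ih =>
        have hodd : r (sgen n (2*j+1)) 1 := by
          rcases tri 1 (sgen n (2*j+1)) with h | h | h
          · exact ((pairP (2*j) ih h)).elim
          · exact (nonone (2*j+1) h.symm).elim
          · exact h
        have heven : r 1 (sgen n (2*j+2)) := by
          rcases tri 1 (sgen n (2*j+2)) with h | h | h
          · exact h
          · exact (nonone (2*j+2) h.symm).elim
          · exact (pairN (2*j+1) hodd (by rw [show 2*j+1+1 = 2*j+2 from rfl]; exact h)).elim
        rw [show 2*(j+1) = 2*j+2 by ring]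
        exact heven
    exact finalP (fun j => by have h := evens (j+1); rwa [show 2*(j+1) = 2*j+2 by ring] at h)
  · exact nonone 0 h1.symm
  · have evens : ∀ j, r (sgen n (2*j)) 1 := by
      intro j
      induction j with
      | zero => simpa using hN
      | succ j ih =>
        have hodd : r 1 (sgen n (2*j+1)) := by
          rcases tri 1 (sgen n (2*j+1)) with h | h | h
          · exact h
          · exact (nonone (2*j+1) h.symm).elim
          · exact ((pairN (2*j) ih h)).elim
        have heven : r (sgen n (2*j+2)) 1 := by
          rcases tri 1 (sgen n (2*j+2)) with h | h | h
          · exact (pairP (2*j+1) hodd (by rw [show 2*j+1+1 = 2*j+2 from rfl]; exact h)).elim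
          · exact (nonone (2*j+2) h.symm).elim
          · exact h
        rw [show 2*(j+1) = 2*j+2 by ring]
        exact heven
    exact finalN (fun j => by have h := evens (j+1); rwa [show 2*(j+1) = 2*j+2 by ring] at h)
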